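/- Fix M > 0 and let μ and ν be Borel probability measures on [0,M]. Write opt(μ) = sup_{x ∈ [0,M]} R(x,μ). Then: (i) opt(μ) − opt(ν) ≤ 2·√(M·d_W(μ,ν)); (ii) for every δ < 0, if x_ν ∈ [0,M] satisfies R(x_ν,ν) = opt(ν) and p = max(x_ν + δ, 0), then opt(ν) − R(p,μ) ≤ |δ| + M·d_W(μ,ν)/|δ|. -/

import Mathlib

open MeasureTheory

noncomputable section

/-- Cumulative distribution function `F(t) = μ([0,t])`. -/
def cdf0 (μ : Measure ℝ) (t : ℝ) : ℝ := (μ (Set.Icc 0 t)).toReal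

/-- Wasserstein-1 distance between measures on `[0,M]`: `∫₀^M |F(t) - H(t)| dt`. -/
def wassDist (M : ℝ) (μ ν : Measure ℝ) : ℝ :=
  ∫ t in Set.Icc (0:ℝ) M, |cdf0 μ t - cdf0 ν t|

/-- Expected pricing revenue `R(x,μ) = x · μ{ξ : ξ ≥ x}`. -/
def rev (x : ℝ) (μ : Measure ℝ) : ℝ := x * (μ {ξ : ℝ | x ≤ ξ}).toReal

/-- Optimal revenue `opt(μ) = sup_{x ∈ [0,M]} R(x,μ)`. -/
def optRev (M : ℝ) (μ : Measure ℝ) : ℝ := ⨆ x : Set.Icc (0:ℝ) M, rev x.1 μ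

lemma toReal_prob_le_one (μ : Measure ℝ) [IsProbabilityMeasure μ] (s : Set ℝ) :
    (μ s).toReal ≤ 1 := by
  have h := prob_le_one (μ := μ) (s := s)
  simpa using ENNReal.toReal_mono ENNReal.one_ne_top h

lemma cdf0_mono (μ : Measure ℝ) [IsProbabilityMeasure μ] : Monotone (cdf0 μ) := fun s t hst =>
  ENNReal.toReal_mono (measure_ne_top μ _) (measure_mono (Set.Icc_subset_Icc_right hst))

lemma cdf0_nonneg (μ : Measure ℝ) (t : ℝ) : 0 ≤ cdf0 μ t := ENNReal.toReal_nonneg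

lemma cdf0_le_one (μ : Measure ℝ) [IsProbabilityMeasure μ] (t : ℝ) : cdf0 μ t ≤ 1 :=
  toReal_prob_le_one μ _

lemma measure_Iic_eq (M : ℝ) (μ : Measure ℝ) [IsProbabilityMeasure μ]
    (hμ : μ (Set.Icc 0 M) = 1) {t : ℝ} (ht : 0 ≤ t) :
    μ (Set.Iic t) = μ (Set.Icc 0 t) := by
  have hc : μ (Set.Icc 0 M)ᶜ = 0 := by
    have h := measure_compl (μ := μ) (s := Set.Icc 0 M) measurableSet_Icc (measure_ne_top μ _)
    rw [hμ, measure_univ] at h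
    simpa using h
  have h0 : μ (Set.Iio 0) = 0 := by
    refine measure_mono_null (fun x hx => ?_) hc
    simp only [Set.mem_Iio] at hx
    simp only [Set.mem_compl_iff, Set.mem_Icc, not_and_or, not_le]
    exact Or.inl hx
  have hu : Set.Iic t = Set.Iio 0 ∪ Set.Icc 0 t := by
    ext x
    simp only [Set.mem_Iic, Set.mem_union, Set.mem_Iio, Set.mem_Icc]
    constructor
    · intro h
      by_cases hx : x < 0
      · exact Or.inl hx
      · exact Or.inr ⟨le_of_not_gt hx, h⟩
    · rintro (h | ⟨_, h⟩)
      · linarith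
      · exact h
  rw [hu]
  refine le_antisymm ?_ (measure_mono Set.subset_union_right)
  calc μ (Set.Iio 0 ∪ Set.Icc 0 t) ≤ μ (Set.Iio 0) + μ (Set.Icc 0 t) := measure_union_le _ _
    _ = μ (Set.Icc 0 t) := by rw [h0, zero_add]

lemma tail_eq (M : ℝ) (μ : Measure ℝ) [IsProbabilityMeasure μ]
    (hμ : μ (Set.Icc 0 M) = 1) {t : ℝ} (ht : 0 ≤ t) :
    (μ (Set.Ioi t)).toReal = 1 - cdf0 μ t := by
  have h1 : μ (Set.Ioi t) = 1 - μ (Set.Icc 0 t) := by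
    rw [← measure_Iic_eq M μ hμ ht, ← Set.compl_Iic,
      measure_compl measurableSet_Iic (measure_ne_top μ _), measure_univ]
  rw [h1, ENNReal.toReal_sub_of_le prob_le_one (by simp), ENNReal.toReal_one]
  rfl

lemma integrableOn_absdiff (M : ℝ) (μ ν : Measure ℝ)
    [IsProbabilityMeasure μ] [IsProbabilityMeasure ν] :
    IntegrableOn (fun t => |cdf0 μ t - cdf0 ν t|) (Set.Icc (0:ℝ) M) := by
  have hmeas : Measurable fun t => |cdf0 μ t - cdf0 ν t| :=
    ((cdf0_mono μ).measurable.sub (cdf0_mono ν).measurable).abs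
  refine Integrable.mono' (integrable_const 1) hmeas.aestronglyMeasurable ?_
  filter_upwards with t
  rw [Real.norm_eq_abs, abs_abs, abs_sub_le_iff]
  constructor
  · linarith [cdf0_le_one μ t, cdf0_nonneg ν t]
  · linarith [cdf0_le_one ν t, cdf0_nonneg μ t]

lemma wassDist_nonneg (M : ℝ) (μ ν : Measure ℝ) : 0 ≤ wassDist M μ ν :=
  integral_nonneg fun t => abs_nonneg _

lemma wassDist_comm (M : ℝ) (μ ν : Measure ℝ) : wassDist M ν μ = wassDist M μ ν := by
  unfold wassDist
  simp only [abs_sub_comm]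

lemma key_ineq (M : ℝ) (μ ν : Measure ℝ) [IsProbabilityMeasure μ] [IsProbabilityMeasure ν]
    (hμ : μ (Set.Icc 0 M) = 1) (hν : ν (Set.Icc 0 M) = 1)
    {p x : ℝ} (hp : 0 ≤ p) (hpx : p ≤ x) (hxM : x ≤ M) :
    (x - p) * ((ν {ξ : ℝ | x ≤ ξ}).toReal - (μ {ξ : ℝ | p ≤ ξ}).toReal) ≤ wassDist M μ ν := by
  have hsub : Set.Ico p x ⊆ Set.Icc 0 M := fun t ht =>
    ⟨le_trans hp ht.1, le_trans (le_of_lt ht.2) hxM⟩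
  have hint : IntegrableOn (fun t => |cdf0 μ t - cdf0 ν t|) (Set.Ico p x) :=
    (integrableOn_absdiff M μ ν).mono_set hsub
  have h1 : (x - p) * ((ν {ξ : ℝ | x ≤ ξ}).toReal - (μ {ξ : ℝ | p ≤ ξ}).toReal)
      = ∫ _t in Set.Ico p x, ((ν {ξ : ℝ | x ≤ ξ}).toReal - (μ {ξ : ℝ | p ≤ ξ}).toReal) := by
    rw [setIntegral_const, measureReal_def, Real.volume_Ico, ENNReal.toReal_ofReal (by linarith), smul_eq_mul]
  have h2 : ∫ _t in Set.Ico p x, ((ν {ξ : ℝ | x ≤ ξ}).toReal - (μ {ξ : ℝ | p ≤ ξ}).toReal)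
      ≤ ∫ t in Set.Ico p x, |cdf0 μ t - cdf0 ν t| := by
    refine setIntegral_mono_on ?_ hint measurableSet_Ico ?_
    · exact integrableOn_const (by rw [Real.volume_Ico]; exact ENNReal.ofReal_ne_top)
    · intro t ht
      have ht0 : 0 ≤ t := le_trans hp ht.1
      have ha : (ν {ξ : ℝ | x ≤ ξ}).toReal ≤ 1 - cdf0 ν t := by
        rw [← tail_eq M ν hν ht0]
        exact ENNReal.toReal_mono (measure_ne_top _ _)
          (measure_mono fun ξ hξ => lt_of_lt_of_le ht.2 hξ)
      have hb : 1 - cdf0 μ t ≤ (μ {ξ : ℝ | p ≤ ξ}).toReal := by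
        rw [← tail_eq M μ hμ ht0]
        exact ENNReal.toReal_mono (measure_ne_top _ _)
          (measure_mono fun ξ hξ => le_trans ht.1 (le_of_lt hξ))
      have := le_abs_self (cdf0 μ t - cdf0 ν t)
      linarith
  have h3 : ∫ t in Set.Ico p x, |cdf0 μ t - cdf0 ν t| ≤ wassDist M μ ν := by
    refine setIntegral_mono_set (integrableOn_absdiff M μ ν)
      (Filter.Eventually.of_forall fun t => abs_nonneg _) ?_
    exact HasSubset.Subset.eventuallyLE hsub
  linarith

lemma main_ineq (M : ℝ) (hM : 0 < M) (μ ν : Measure ℝ)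
    [IsProbabilityMeasure μ] [IsProbabilityMeasure ν]
    (hμ : μ (Set.Icc 0 M) = 1) (hν : ν (Set.Icc 0 M) = 1)
    {x δ : ℝ} (hx0 : 0 ≤ x) (hxM : x ≤ M) (hδ : 0 < δ) :
    rev x ν - rev (max (x - δ) 0) μ ≤ δ + M * wassDist M μ ν / δ := by
  have hW := wassDist_nonneg M μ ν
  have hrhs : 0 ≤ M * wassDist M μ ν / δ := by positivity
  by_cases h : x - δ ≤ 0
  · rw [max_eq_right h]
    have h0 : rev 0 μ = 0 := by simp [rev]
    have ha : rev x ν ≤ x := by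
      have h1 := toReal_prob_le_one ν {ξ : ℝ | x ≤ ξ}
      calc rev x ν ≤ x * 1 := mul_le_mul_of_nonneg_left h1 hx0
        _ = x := mul_one x
    rw [h0]
    linarith
  · push_neg at h
    rw [max_eq_left (le_of_lt h)]
    have hp0 : 0 ≤ x - δ := le_of_lt h
    have hpM : x - δ ≤ M := by linarith
    have hkey := key_ineq M μ ν hμ hν hp0 (by linarith : x - δ ≤ x) hxM
    have hxp : x - (x - δ) = δ := by ring
    rw [hxp] at hkey
    have ha1 : (ν {ξ : ℝ | x ≤ ξ}).toReal ≤ 1 := toReal_prob_le_one ν _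
    have ha0 : 0 ≤ (ν {ξ : ℝ | x ≤ ξ}).toReal := ENNReal.toReal_nonneg
    set a := (ν {ξ : ℝ | x ≤ ξ}).toReal with hadef
    set b := (μ {ξ : ℝ | x - δ ≤ ξ}).toReal with hbdef
    have hrev : rev x ν - rev (x - δ) μ = δ * a + (x - δ) * (a - b) := by
      show x * a - (x - δ) * b = _
      ring
    rw [hrev]
    have hδa : δ * a ≤ δ := by nlinarith
    have hpab : (x - δ) * (a - b) ≤ M * wassDist M μ ν / δ := by
      rcases le_or_gt (a - b) 0 with hab | hab
      · have : (x - δ) * (a - b) ≤ 0 := mul_nonpos_of_nonneg_of_nonpos hp0 hab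
        linarith
      · have h1 : a - b ≤ wassDist M μ ν / δ := by
          rw [le_div_iff₀ hδ, mul_comm]
          exact hkey
        calc (x - δ) * (a - b) ≤ M * (a - b) :=
              mul_le_mul_of_nonneg_right hpM (le_of_lt hab)
          _ ≤ M * (wassDist M μ ν / δ) := mul_le_mul_of_nonneg_left h1 (le_of_lt hM)
          _ = M * wassDist M μ ν / δ := by ring
    linarith

lemma bddAbove_rev (M : ℝ) (μ : Measure ℝ) [IsProbabilityMeasure μ] (hM : 0 ≤ M) :
    BddAbove (Set.range fun x : Set.Icc (0:ℝ) M => rev x.1 μ) := by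
  refine ⟨M, ?_⟩
  rintro y ⟨x, rfl⟩
  have h1 := toReal_prob_le_one μ {ξ : ℝ | x.1 ≤ ξ}
  have h0 : 0 ≤ (μ {ξ : ℝ | x.1 ≤ ξ}).toReal := ENNReal.toReal_nonneg
  have hx := x.2
  simp only [Set.mem_Icc] at hx
  calc rev x.1 μ = x.1 * (μ {ξ : ℝ | x.1 ≤ ξ}).toReal := rfl
    _ ≤ x.1 * 1 := mul_le_mul_of_nonneg_left h1 hx.1
    _ = x.1 := mul_one _
    _ ≤ M := hx.2

lemma le_optRev (M : ℝ) (hM : 0 ≤ M) (μ : Measure ℝ) [IsProbabilityMeasure μ]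
    {x : ℝ} (hx : x ∈ Set.Icc (0:ℝ) M) : rev x μ ≤ optRev M μ :=
  le_ciSup (bddAbove_rev M μ hM) (⟨x, hx⟩ : Set.Icc (0:ℝ) M)

lemma optRev_le (M : ℝ) (hM : 0 ≤ M) (μ : Measure ℝ) {c : ℝ}
    (h : ∀ x ∈ Set.Icc (0:ℝ) M, rev x μ ≤ c) : optRev M μ ≤ c := by
  have : Nonempty (Set.Icc (0:ℝ) M) := ⟨⟨0, le_refl 0, hM⟩⟩
  exact ciSup_le fun x => h x.1 x.2

theorem pricing_opt_and_deflated_price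
    (M : ℝ) (hM : 0 < M)
    (μ ν : Measure ℝ) [IsProbabilityMeasure μ] [IsProbabilityMeasure ν]
    (hμ : μ (Set.Icc 0 M) = 1) (hν : ν (Set.Icc 0 M) = 1) :
    optRev M μ - optRev M ν ≤ 2 * Real.sqrt (M * wassDist M μ ν)
    ∧
    ∀ δ : ℝ, δ < 0 → ∀ xν ∈ Set.Icc (0:ℝ) M, rev xν ν = optRev M ν →
      optRev M ν - rev (max (xν + δ) 0) μ ≤ |δ| + M * wassDist M μ ν / |δ| := by
  have hW0 := wassDist_nonneg M μ ν
  constructor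
  · have hstep : ∀ δ : ℝ, 0 < δ →
        optRev M μ - optRev M ν ≤ δ + M * wassDist M μ ν / δ := by
      intro δ hδ
      have hle : optRev M μ ≤ optRev M ν + (δ + M * wassDist M μ ν / δ) := by
        refine optRev_le M (le_of_lt hM) μ fun x hx => ?_
        have h1 := main_ineq M hM ν μ hν hμ hx.1 hx.2 hδ
        rw [wassDist_comm] at h1
        have hmem : max (x - δ) 0 ∈ Set.Icc (0:ℝ) M := by
          constructor
          · exact le_max_right _ _
          · have := hx.2
            rcases le_or_gt (x - δ) 0 with hc | hc
            · rw [max_eq_right hc]; exact le_of_lt hM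
            · rw [max_eq_left (le_of_lt hc)]; linarith
        have h2 := le_optRev M (le_of_lt hM) ν hmem
        linarith
      linarith
    rcases eq_or_lt_of_le hW0 with hW | hW
    · have hle0 : optRev M μ - optRev M ν ≤ 0 := by
        refine le_of_forall_pos_le_add fun ε hε => ?_
        have := hstep ε hε
        rw [← hW] at this
        simp only [mul_zero, zero_div] at this
        linarith
      rw [← hW, mul_zero, Real.sqrt_zero]
      linarith
    · have hD : 0 < M * wassDist M μ ν := mul_pos hM hW
      have hs : 0 < Real.sqrt (M * wassDist M μ ν) := Real.sqrt_pos.2 hD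
      have h1 := hstep _ hs
      rw [Real.div_sqrt] at h1
      linarith
  · intro δ hδ xν hxν hopt
    have hd : 0 < -δ := by linarith
    have h := main_ineq M hM μ ν hμ hν hxν.1 hxν.2 hd
    rw [hopt] at h
    rw [abs_of_neg hδ]
    have hxd : xν - -δ = xν + δ := by ring
    rw [hxd] at h
    exact h

end
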